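/- Let A be an associative unital ℝ-algebra, n a real number, and d, δ, x, y, Δ, Q, N, F elements of A satisfying x·x = 0, d·x + x·d = 0, x·y + y·x = Q, Q·d − d·Q = −2x, Δ·x − x·Δ = −2d, N·x − x·N = x, d·y + y·d = N + F, and δ·x + x·δ = F − N − (n+2)·1. Define ιD := −δ·(n·1 + 2N − 2·1) + y·Δ. Let M be a module over A, let ℓ and k be real numbers, and let U ∈ M satisfy N·U = (ℓ − n/2)•U and F·U = k•U. If there exist V, W ∈ M with y·U = x·V + Q·W, then ιD·(x·U) − 2(ℓ+1)(n/2 + ℓ − k) • U lies in the subset x·M + Q·M = {x·m + Q·m' : m, m' ∈ M}. (The coefficient 2(ℓ+1)(n/2 + ℓ − k) is nonzero precisely when ℓ ≠ −1 and k ≠ n/2 + ℓ.) -/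
import Mathlib


/-- The operator `ι(𝔻) = −δ̃(n + 2∇_𝕏 − 2) + ι(𝕏)Δ̃` of Branson–Gover, modelled in
an abstract associative `ℝ`-algebra. -/
def iotaD {A : Type*} [Ring A] [Algebra ℝ A] (n : ℝ) (δ y Δ N : A) : A :=
  -(δ * (n • (1 : A) + (2 : ℝ) • N - (2 : ℝ) • (1 : A))) + y * Δ

/-- Algebraic content of Proposition 3.10(ii) of Branson–Gover: for `U` an
ambient lift of a weighted `k`-form (so `ι(𝕏)U = ε(𝕏)V + QW`), the element
`ι(𝔻) ε(𝕏) U − 2(ℓ+1)(n/2 + ℓ − k) U` lies in `ε(𝕏)·M + Q·M`; the coefficient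
`2(ℓ+1)(n/2 + ℓ − k)` is nonzero precisely when `ℓ ≠ −1` and `k ≠ n/2 + ℓ`. -/
theorem stmt_17
    {A : Type*} [Ring A] [Algebra ℝ A]
    (n : ℝ) (d δ x y Δ Q N F : A)
    (h₁ : x * x = 0)
    (h₂ : d * x + x * d = 0)
    (h₃ : x * y + y * x = Q)
    (h₄ : Q * d - d * Q = -((2 : ℝ) • x))
    (h₅ : Δ * x - x * Δ = -((2 : ℝ) • d))
    (h₆ : N * x - x * N = x)
    (h₇ : d * y + y * d = N + F)
    (h₈ : δ * x + x * δ = F - N - (n + 2) • (1 : A))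
    (M : Type*) [AddCommGroup M] [Module ℝ M] [Module A M] [IsScalarTower ℝ A M]
    (ℓ k : ℝ) (U : M)
    (hU : N • U = (ℓ - n / 2) • U) (hF : F • U = k • U)
    (V W : M) (hVW : y • U = x • V + Q • W) :
    (∃ m m' : M,
      iotaD n δ y Δ N • (x • U) - (2 * (ℓ + 1) * (n / 2 + ℓ - k)) • U =
        x • m + Q • m') ∧
    (2 * (ℓ + 1) * (n / 2 + ℓ - k) ≠ 0 ↔ (ℓ ≠ -1 ∧ k ≠ n / 2 + ℓ)) := by
  have sc : ∀ (r : ℝ) (a : A) (m : M), a • (r • m) = r • (a • m) := fun r a m =>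
    smul_comm a r m
  constructor
  · -- N • (x • U)
    have hNx : N • (x • U) = (ℓ - n / 2 + 1) • (x • U) := by
      rw [← mul_smul, sub_eq_iff_eq_add.mp h₆, add_smul, mul_smul, hU, sc,
        add_smul, one_smul]
      abel
    -- δ • (x • U)
    have hδx : δ • (x • U) = (k - (ℓ - n / 2) - (n + 2)) • U - x • (δ • U) := by
      have e : δ * x = F - N - (n + 2) • (1 : A) - x * δ := by
        rw [← h₈]; abel
      rw [← mul_smul, e, sub_smul, sub_smul, sub_smul, hF, hU, mul_smul,
        smul_assoc, one_smul, ← sub_smul, ← sub_smul]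
    -- Δ • (x • U)
    have hΔx : Δ • (x • U) = x • (Δ • U) - (2 : ℝ) • (d • U) := by
      have e : Δ * x = x * Δ - (2 : ℝ) • d := by
        rw [sub_eq_iff_eq_add.mp h₅]; abel
      rw [← mul_smul, e, sub_smul, mul_smul, smul_assoc]
    -- y • (x • (Δ • U))
    have hyx : y • (x • (Δ • U)) = Q • (Δ • U) - x • (y • (Δ • U)) := by
      have e : y * x = Q - x * y := by rw [← h₃]; abel
      rw [← mul_smul, e, sub_smul, mul_smul]
    -- y • (d • U)
    have hyd : y • (d • U)
        = (ℓ - n / 2 + k) • U + x • (d • V) - Q • (d • W) - (2 : ℝ) • (x • W) := by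
      have e : y * d = N + F - d * y := by rw [← h₇]; abel
      have edx : d • (x • V) = -(x • (d • V)) := by
        have e2 : d * x = -(x * d) := eq_neg_of_add_eq_zero_left h₂
        rw [← mul_smul, e2, neg_smul, mul_smul]
      have edQ : d • (Q • W) = Q • (d • W) + (2 : ℝ) • (x • W) := by
        have e3 : d * Q = Q * d + (2 : ℝ) • x := by
          rw [sub_eq_iff_eq_add.mp h₄]; abel
        rw [← mul_smul, e3, add_smul, mul_smul, smul_assoc]
      rw [← mul_smul, e, sub_smul, add_smul, hU, hF, mul_smul, hVW, smul_add,
        edx, edQ, ← add_smul]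
      abel
    refine ⟨(2 * ℓ) • (δ • U) - y • (Δ • U) - (2 : ℝ) • (d • V) + (4 : ℝ) • W,
      Δ • U + (2 : ℝ) • (d • W), ?_⟩
    have expand : iotaD n δ y Δ N • (x • U)
        = -(δ • (((n • (1 : A) + (2 : ℝ) • N - (2 : ℝ) • (1 : A))) • (x • U)))
          + y • (Δ • (x • U)) := by
      rw [iotaD, add_smul, neg_smul, mul_smul, mul_smul]
    have hcoef : ((n • (1 : A) + (2 : ℝ) • N - (2 : ℝ) • (1 : A))) • (x • U)
        = (2 * ℓ) • (x • U) := by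
      rw [sub_smul, add_smul, smul_assoc, smul_assoc, smul_assoc, one_smul, hNx,
        smul_smul, ← add_smul, ← sub_smul]
      congr 1
      ring
    rw [expand, hcoef, sc, hδx, hΔx, smul_sub y (x • (Δ • U)), hyx]
    simp only [sc]
    rw [hyd]
    simp only [smul_sub, smul_add, smul_neg, sc]
    generalize x • δ • U = a1
    generalize x • y • Δ • U = a2
    generalize Q • Δ • U = a3
    generalize x • d • V = a4
    generalize Q • d • W = a5
    generalize x • W = a6
    module
  · constructor
    · intro h
      constructor
      · intro hl; apply h; rw [hl]; ring
      · intro hk; apply h; rw [hk]; ring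
    · rintro ⟨h1, h2⟩ h
      rcases mul_eq_zero.mp h with h' | h'
      · rcases mul_eq_zero.mp h' with h'' | h''
        · norm_num at h''
        · exact h1 (by linarith)
      · exact h2 (by linarith)
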